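/- Let σ_r be the Banks–Levy–Sepanski 2-cocycle on GL_r(F) (with twisting parameter c). For any g ∈ GL_r(F) and a ∈ F^×: σ_r(g, aI_r) σ_r(aI_r, g)^{-1} = (det(g), a^{r-1+2cr})_F, where (−,−)_F is the n-th order Hilbert symbol. -/

import Mathlib

/-- Let `σ` be the Banks–Levy–Sepanski 2-cocycle on `GL_r(F)` with twisting parameter `c`
(characterized by the listed properties: the 2-cocycle identity, invariance under
unipotent translations, the torus formula involving the `n`-th order Hilbert symbol `h`,
the formulas for the Weyl representatives `𝔐`, together with the Bruhat decomposition).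
Then for any invertible `g` and any `a ∈ F^×`:
`σ(g, aI_r) σ(aI_r, g)⁻¹ = (det g, a^{r-1+2cr})_F`. -/
theorem bls_cocycle_scalar_commutator
    {F : Type*} [Field F] {μ : Type*} [CommGroup μ]
    (r : ℕ) (hr : 1 ≤ r) (c : ℕ)
    -- the n-th order Hilbert symbol and its standard properties
    (h : Fˣ → Fˣ → μ)
    (hmul_left : ∀ a b d : Fˣ, h (a * b) d = h a d * h b d)
    (hmul_right : ∀ a b d : Fˣ, h a (b * d) = h a b * h a d)
    (hinv : ∀ a b : Fˣ, (h a b)⁻¹ = h b a)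
    (hneg : ∀ a : Fˣ, h a (-a) = 1)
    -- the cocycle
    (σ : Matrix (Fin r) (Fin r) F → Matrix (Fin r) (Fin r) F → μ)
    -- 2-cocycle identity
    (hcocycle : ∀ g g' g'' : Matrix (Fin r) (Fin r) F,
      IsUnit g → IsUnit g' → IsUnit g'' →
      σ g g' * σ (g * g') g'' = σ g (g' * g'') * σ g' g'')
    -- upper triangular unipotent matrices
    (unip : Matrix (Fin r) (Fin r) F → Prop)
    (hunip_def : ∀ u, unip u ↔ ∀ i j : Fin r, j ≤ i → u i j = if i = j then 1 else 0)
    -- property (1): σ(ng, g'n') = σ(g, g')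
    (hprop1 : ∀ n g g' n' : Matrix (Fin r) (Fin r) F, unip n → unip n' →
      IsUnit g → IsUnit g' → σ (n * g) (g' * n') = σ g g')
    -- property (2): σ(gn, g') = σ(g, ng')
    (hprop2 : ∀ g n g' : Matrix (Fin r) (Fin r) F, unip n →
      IsUnit g → IsUnit g' → σ (g * n) g' = σ g (n * g'))
    -- property (4): torus formula
    (hprop4 : ∀ t t' : Fin r → Fˣ,
      σ (Matrix.diagonal fun i => (t i : F)) (Matrix.diagonal fun i => (t' i : F)) =
        (∏ i : Fin r, ∏ j : Fin r, if i < j then h (t i) (t' j) else 1) *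
          h (∏ i, t i) (∏ i, t' i) ^ c)
    -- the set 𝔐 of Weyl group representatives
    (MM : Set (Matrix (Fin r) (Fin r) F))
    (hMMunit : ∀ η ∈ MM, IsUnit η)
    -- property (3): σ(η, t) is a product of symbols h(-t_j, t_i)
    (hprop3 : ∀ η ∈ MM, ∀ t : Fin r → Fˣ, ∃ S : Finset (Fin r × Fin r),
      σ η (Matrix.diagonal fun i => (t i : F)) = ∏ p ∈ S, h (-(t p.2)) (t p.1))
    -- property (5): σ(t, η) = 1
    (hprop5 : ∀ η ∈ MM, ∀ t : Fin r → Fˣ,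
      σ (Matrix.diagonal fun i => (t i : F)) η = 1)
    -- Bruhat decomposition
    (hbruhat : ∀ g : Matrix (Fin r) (Fin r) F, IsUnit g →
      ∃ (n n' : Matrix (Fin r) (Fin r) F) (t : Fin r → Fˣ)
        (η : Matrix (Fin r) (Fin r) F), unip n ∧ unip n' ∧ η ∈ MM ∧
          g = n * (Matrix.diagonal fun i => (t i : F)) * η * n') :
    ∀ (g : (Matrix (Fin r) (Fin r) F)ˣ) (a : Fˣ),
      σ (g : Matrix (Fin r) (Fin r) F) (Matrix.diagonal fun _ => (a : F)) *
          (σ (Matrix.diagonal fun _ => (a : F)) (g : Matrix (Fin r) (Fin r) F))⁻¹ =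
        h (Units.map (Matrix.detMonoidHom : Matrix (Fin r) (Fin r) F →* F) g)
          (a ^ (r - 1 + 2 * c * r)) := by
  classical
  intro g a
  set Z : Matrix (Fin r) (Fin r) F := Matrix.diagonal fun _ => (a : F) with hZdef
  -- basic Hilbert symbol facts
  have h1x : ∀ x : Fˣ, h 1 x = 1 := by
    intro x
    have := hmul_left 1 1 x
    rw [one_mul] at this
    exact (right_eq_mul.mp this)
  have hx1 : ∀ x : Fˣ, h x 1 = 1 := by
    intro x
    have := hmul_right x 1 1
    rw [one_mul] at this
    exact (right_eq_mul.mp this)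
  have hpowR : ∀ (x b : Fˣ) (m : ℕ), h x (b ^ m) = h x b ^ m := by
    intro x b m
    induction m with
    | zero => simpa using hx1 x
    | succ k ih => rw [pow_succ, hmul_right, ih, pow_succ]
  have hunip_one : unip 1 := by
    rw [hunip_def]
    intro i j _
    simp [Matrix.one_apply]
  have hZunit : IsUnit Z := by
    rw [Matrix.isUnit_iff_isUnit_det, hZdef, Matrix.det_diagonal]
    simp only [Finset.prod_const]
    exact (a.isUnit.pow _)
  have hZcomm : ∀ m : Matrix (Fin r) (Fin r) F, Z * m = m * Z := by
    intro m
    ext i j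
    simp [hZdef, Matrix.diagonal_mul, Matrix.mul_diagonal, mul_comm]
  -- the commutator map β
  set β : Matrix (Fin r) (Fin r) F → μ := fun m => σ m Z * (σ Z m)⁻¹ with hβdef
  have hβmul : ∀ m m' : Matrix (Fin r) (Fin r) F, IsUnit m → IsUnit m' → β (m * m') = β m * β m' := by
    intro m m' hm hm'
    have e1 := hcocycle m m' Z hm hm' hZunit
    have e2 := hcocycle m Z m' hm hZunit hm'
    have e3 := hcocycle Z m m' hZunit hm hm'
    rw [hZcomm m'] at e2
    rw [hZcomm m] at e3
    have e1' : σ (m * m') Z = (σ m m')⁻¹ * (σ m (m' * Z) * σ m' Z) :=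
      eq_inv_mul_iff_mul_eq.mpr e1
    have e2' : σ m (m' * Z) = (σ m Z * σ (m * Z) m') * (σ Z m')⁻¹ :=
      eq_mul_inv_iff_mul_eq.mpr e2.symm
    have e3' : σ (m * Z) m' = (σ Z m)⁻¹ * (σ Z (m * m') * σ m m') :=
      eq_inv_mul_iff_mul_eq.mpr e3
    simp only [hβdef]
    rw [e1', e2', e3']
    have key : ∀ x y z : μ, x * (y * (z * x⁻¹)) = y * z := by
      intro x y z
      have hk : x * (y * (z * x⁻¹)) = (y * z) * (x * x⁻¹) := by ac_rfl
      rw [hk, mul_inv_cancel, mul_one]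
    simp [mul_comm, mul_left_comm, mul_assoc]
    rw [key]
  -- β is trivial on unipotent matrices
  have hσ1Z : σ 1 Z = 1 := by
    have := hprop4 (fun _ => 1) (fun _ => a)
    simp only [Units.val_one, Matrix.diagonal_one, h1x, ite_self, Finset.prod_const_one,
      Finset.prod_const, one_pow, one_mul] at this
    rw [← hZdef] at this
    exact this
  have hσZ1 : σ Z 1 = 1 := by
    have := hprop4 (fun _ => a) (fun _ => 1)
    simp only [Units.val_one, Matrix.diagonal_one, hx1, ite_self, Finset.prod_const_one,
      Finset.prod_const, one_pow, mul_one] at this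
    rw [← hZdef] at this
    exact this
  have hβ_unip : ∀ u, unip u → β u = 1 := by
    intro u hu
    have huZ : σ u Z = 1 := by
      have := hprop1 u 1 Z 1 hu hunip_one isUnit_one hZunit
      rw [mul_one, mul_one] at this
      rw [this, hσ1Z]
    have hZu : σ Z u = 1 := by
      have := hprop1 1 Z 1 u hunip_one hu hZunit isUnit_one
      rw [one_mul, one_mul] at this
      rw [this, hσZ1]
    simp [hβdef, huZ, hZu]
  -- β on diagonal matrices
  have hβ_diag : ∀ t : Fin r → Fˣ,
      β (Matrix.diagonal fun i => (t i : F)) = h (∏ i, t i) (a ^ (r - 1 + 2 * c * r)) := by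
    intro t
    have hT := hprop4 t (fun _ => a)
    have hT' := hprop4 (fun _ => a) t
    rw [← hZdef] at hT hT'
    have hca : (∏ _i : Fin r, a) = a ^ r := by
      rw [Finset.prod_const, Finset.card_univ, Fintype.card_fin]
    rw [hca] at hT hT'
    set T : Fˣ := ∏ i, t i with hTdef
    -- inverse of the second torus value
    have hstep : β (Matrix.diagonal fun i => (t i : F)) =
        ((∏ i : Fin r, ∏ j : Fin r, if i < j then h (t i) a else 1) *
          (∏ i : Fin r, ∏ j : Fin r, if i < j then h (t j) a else 1)) *
          (h T a ^ (r * c) * h T a ^ (r * c)) := by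
      simp only [hβdef]
      rw [hT, hT']
      rw [mul_inv_rev]
      have i1 : (h (a ^ r) T ^ c)⁻¹ = h T a ^ (r * c) := by
        rw [← inv_pow, hinv, hpowR, ← pow_mul]
      have i2 : h T (a ^ r) ^ c = h T a ^ (r * c) := by
        rw [hpowR, ← pow_mul]
      have i3 : ((∏ i : Fin r, ∏ j : Fin r, if i < j then h a (t j) else 1))⁻¹ =
          ∏ i : Fin r, ∏ j : Fin r, if i < j then h (t j) a else 1 := by
        rw [← Finset.prod_inv_distrib]
        refine Finset.prod_congr rfl fun i _ => ?_
        rw [← Finset.prod_inv_distrib]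
        refine Finset.prod_congr rfl fun j _ => ?_
        rw [apply_ite Inv.inv, inv_one, hinv]
      rw [i1, i2, i3]
      ac_rfl
    set f : Fin r → μ := fun i => h (t i) a with hfdef
    have hswap : (∏ i : Fin r, ∏ j : Fin r, if i < j then f j else 1) =
        ∏ i : Fin r, ∏ j : Fin r, if j < i then f i else 1 := Finset.prod_comm
    have hinner : ∀ i : Fin r, (∏ j : Fin r, if j = i then 1 else f i) = f i ^ (r - 1) := by
      intro i
      have e : (∏ j : Fin r, if j = i then 1 else f i) =
          ∏ j ∈ Finset.univ.filter (fun j => ¬ j = i), f i := by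
        rw [Finset.prod_filter]
        exact Finset.prod_congr rfl fun j _ => (ite_not _ _ _).symm
      rw [e, Finset.prod_const]
      congr 1
      have : Finset.univ.filter (fun j => ¬ j = i) = Finset.univ.erase i := by
        ext x
        simp [Finset.mem_erase]
      rw [this, Finset.card_erase_of_mem (Finset.mem_univ i), Finset.card_univ,
        Fintype.card_fin]
    have hP : (∏ i : Fin r, ∏ j : Fin r, if i < j then f i else 1) *
        (∏ i : Fin r, ∏ j : Fin r, if i < j then f j else 1) = (∏ i, f i) ^ (r - 1) := by
      rw [hswap, ← Finset.prod_mul_distrib]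
      rw [← Finset.prod_pow]
      refine Finset.prod_congr rfl fun i _ => ?_
      rw [← Finset.prod_mul_distrib, ← hinner i]
      refine Finset.prod_congr rfl fun j _ => ?_
      rcases lt_trichotomy i j with hc | hc | hc
      · simp [hc, lt_asymm hc, ne_of_gt hc]
      · subst hc
        simp
      · simp [hc, lt_asymm hc, ne_of_lt hc]
    have hfprod : (∏ i, f i) = h T a := by
      let φ : Fˣ →* μ := MonoidHom.mk' (fun x => h x a) (fun x y => hmul_left x y a)
      exact (map_prod φ t Finset.univ).symm
    rw [hstep, hP, hfprod]
    have : h T a ^ (r - 1) * (h T a ^ (r * c) * h T a ^ (r * c)) =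
        h T a ^ (r - 1 + (r * c + r * c)) := by
      rw [pow_add, pow_add]
    rw [this, hpowR]
    congr 2
    ring
  -- transvections
  have htrans_unit : ∀ (i j : Fin r) (x : F), i ≠ j → IsUnit (Matrix.transvection i j x) := by
    intro i j x hij
    rw [Matrix.isUnit_iff_isUnit_det, Matrix.det_transvection_of_ne i j hij x]
    exact isUnit_one
  have hβ_upper : ∀ (i j : Fin r) (x : F), i < j → β (Matrix.transvection i j x) = 1 := by
    intro i j x hij
    apply hβ_unip
    rw [hunip_def]
    intro k l hlk
    have hns : ¬ (i = k ∧ j = l) := by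
      rintro ⟨rfl, rfl⟩
      exact absurd (lt_of_lt_of_le hij hlk) (lt_irrefl _)
    simp [Matrix.transvection, Matrix.add_apply, Matrix.one_apply, Matrix.single, hns]
  have hβ_lower : ∀ (i j : Fin r) (x : F), j < i → β (Matrix.transvection i j x) = 1 := by
    intro i j x hji
    set s : Equiv.Perm (Fin r) := Equiv.swap i j with hsdef
    set P : Matrix (Fin r) (Fin r) F := Matrix.of (fun k l => if s k = l then 1 else 0)
      with hPdef
    have hPmulL : ∀ N : Matrix (Fin r) (Fin r) F, P * N = Matrix.of (fun k l => N (s k) l) := by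
      intro N
      ext k l
      simp only [Matrix.mul_apply, hPdef, Matrix.of_apply, ite_mul, one_mul, zero_mul]
      rw [Finset.sum_ite_eq Finset.univ (s k) (fun m => N m l)]
      simp
    have hPmulR : ∀ N : Matrix (Fin r) (Fin r) F, N * P = Matrix.of (fun k l => N k (s l)) := by
      intro N
      ext k l
      simp only [Matrix.mul_apply, hPdef, Matrix.of_apply, mul_ite, mul_one, mul_zero]
      have hcond : ∀ m : Fin r, (s m = l) = (m = s l) := by
        intro m
        apply propext
        constructor
        · rintro rfl; rw [Equiv.swap_apply_self]
        · rintro rfl; rw [Equiv.swap_apply_self]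
      simp only [hcond]
      rw [Finset.sum_ite_eq' Finset.univ (s l) (fun m => N k m)]
      simp
    have hPP : P * P = 1 := by
      rw [hPmulL]
      ext k l
      simp [Matrix.of_apply, hPdef, hsdef, Equiv.swap_apply_self, Matrix.one_apply, eq_comm]
    have hPunit : IsUnit P := ⟨⟨P, P, hPP, hPP⟩, rfl⟩
    have hconj : P * Matrix.transvection j i x = Matrix.transvection i j x * P := by
      rw [hPmulL, hPmulR]
      ext k l
      simp only [Matrix.of_apply, Matrix.transvection, Matrix.add_apply, Matrix.one_apply,
        Matrix.single, Matrix.of_apply]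
      have c1 : (s k = l) = (k = s l) := by
        apply propext
        constructor
        · rintro rfl; rw [Equiv.swap_apply_self]
        · rintro rfl; rw [Equiv.swap_apply_self]
      have c2 : (j = s k ∧ i = l) = (i = k ∧ j = s l) := by
        apply propext
        constructor
        · rintro ⟨hh1, rfl⟩
          have : s j = k := by rw [hh1, Equiv.swap_apply_self]
          rw [hsdef] at this ⊢
          rw [Equiv.swap_apply_right] at this
          exact ⟨this, by rw [Equiv.swap_apply_left]⟩
        · rintro ⟨rfl, hh2⟩
          have : s j = l := by rw [hh2, Equiv.swap_apply_self]
          rw [hsdef] at this ⊢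
          rw [Equiv.swap_apply_right] at this
          exact ⟨by rw [Equiv.swap_apply_left], this⟩
      simp only [c1, c2]
    have hTlow : IsUnit (Matrix.transvection i j x) := htrans_unit i j x (ne_of_gt hji)
    have hTup : IsUnit (Matrix.transvection j i x) := htrans_unit j i x (ne_of_lt hji)
    have e1 : β (P * Matrix.transvection j i x) = β P * β (Matrix.transvection j i x) :=
      hβmul _ _ hPunit hTup
    have e2 : β (Matrix.transvection i j x * P) = β (Matrix.transvection i j x) * β P :=
      hβmul _ _ hTlow hPunit
    rw [hconj, e2, hβ_upper j i x hji, mul_one] at e1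
    exact right_eq_mul.mp e1.symm
  have hβ_trans : ∀ tv : Matrix.TransvectionStruct (Fin r) F, β tv.toMatrix = 1 := by
    intro tv
    rcases lt_or_gt_of_ne tv.hij with hlt | hgt
    · exact hβ_upper tv.i tv.j tv.c hlt
    · exact hβ_lower tv.i tv.j tv.c hgt
  -- products of lists of transvections
  have hβ_list : ∀ L : List (Matrix.TransvectionStruct (Fin r) F),
      IsUnit (L.map Matrix.TransvectionStruct.toMatrix).prod ∧
        β (L.map Matrix.TransvectionStruct.toMatrix).prod = 1 ∧
        (L.map Matrix.TransvectionStruct.toMatrix).prod.det = 1 := by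
    intro L
    induction L with
    | nil =>
      refine ⟨isUnit_one, ?_, by simp⟩
      simp only [List.map_nil, List.prod_nil]
      exact hβ_unip 1 hunip_one
    | cons tv L ih =>
      have htvu : IsUnit tv.toMatrix :=
        htrans_unit tv.i tv.j tv.c tv.hij
      simp only [List.map_cons, List.prod_cons]
      refine ⟨htvu.mul ih.1, ?_, ?_⟩
      · rw [hβmul _ _ htvu ih.1, hβ_trans tv, ih.2.1, one_mul]
      · rw [Matrix.det_mul, ih.2.2, mul_one]
        exact Matrix.det_transvection_of_ne tv.i tv.j tv.hij tv.c
  -- decompose g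
  obtain ⟨L, L', D, hdecomp⟩ :=
    Matrix.Pivot.exists_list_transvec_mul_diagonal_mul_list_transvec
      ((g : Matrix (Fin r) (Fin r) F))
  have hgu : IsUnit ((g : Matrix (Fin r) (Fin r) F)) := g.isUnit
  have hLA := hβ_list L
  have hLB := hβ_list L'
  have hDdet : IsUnit ((Matrix.diagonal D).det) := by
    have h1 : IsUnit ((g : Matrix (Fin r) (Fin r) F)).det :=
      (Matrix.isUnit_iff_isUnit_det _).mp hgu
    rw [hdecomp, Matrix.det_mul, Matrix.det_mul] at h1
    exact isUnit_of_mul_isUnit_right (isUnit_of_mul_isUnit_left h1)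
  have hDunit : IsUnit (Matrix.diagonal D) := (Matrix.isUnit_iff_isUnit_det _).mpr hDdet
  have hDne : ∀ i, D i ≠ 0 := by
    rw [Matrix.det_diagonal] at hDdet
    intro i
    exact Finset.prod_ne_zero_iff.mp hDdet.ne_zero i (Finset.mem_univ i)
  set t : Fin r → Fˣ := fun i => Units.mk0 (D i) (hDne i) with htdef
  have hDdiag : Matrix.diagonal D = Matrix.diagonal (fun i => ((t i : Fˣ) : F)) := rfl
  have hβg : β ((g : Matrix (Fin r) (Fin r) F)) = h (∏ i, t i) (a ^ (r - 1 + 2 * c * r)) := by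
    rw [hdecomp, hβmul _ _ (hLA.1.mul hDunit) hLB.1, hβmul _ _ hLA.1 hDunit,
      hLA.2.1, hLB.2.1, one_mul, mul_one, hDdiag, hβ_diag t]
  have hdetg : Units.map (Matrix.detMonoidHom : Matrix (Fin r) (Fin r) F →* F) g =
      ∏ i, t i := by
    apply Units.ext
    have hcoe : ((Units.map (Matrix.detMonoidHom : Matrix (Fin r) (Fin r) F →* F) g : Fˣ) : F)
        = ((g : Matrix (Fin r) (Fin r) F)).det := rfl
    rw [hcoe, hdecomp, Matrix.det_mul, Matrix.det_mul, hLA.2.2, hLB.2.2, one_mul, mul_one,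
      Matrix.det_diagonal]
    rw [← Units.coeHom_apply, map_prod]
    rfl
  rw [hdetg]
  exact hβg
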